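/- Let V : ℝ^d × P(ℝ^d × ℝ^d) → ℝ be monotone in the Lasry–Lions sense, i.e., ∫ (V(x,μ₁) − V(x,μ₂)) d(μ₁ − μ₂)(x,α) ≥ 0 for all probability measures μ₁, μ₂ on ℝ^d × ℝ^d. Fix β ≥ 0 and define L(x,α,μ) = |α + β ∫ γ dμ(y,γ)|²/2 + V(x,μ). Then L satisfies the Lasry–Lions monotonicity condition: for all compactly supported probability measures μ₁, μ₂ on ℝ^d × ℝ^d, ∫ (L(x,α,μ₁) − L(x,α,μ₂)) d(μ₁ − μ₂)(x,α) ≥ 0. -/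

import Mathlib

open MeasureTheory

lemma integrable_of_compactNull {X E : Type*} [MeasurableSpace X] [TopologicalSpace X]
    [OpensMeasurableSpace X] [NormedAddCommGroup E] [SecondCountableTopologyEither X E]
    {μ : Measure X} [IsFiniteMeasure μ]
    {K : Set X} (hK : IsCompact K) (h0 : μ Kᶜ = 0) {f : X → E} (hf : Continuous f) :
    Integrable f μ := by
  obtain ⟨C, hC⟩ := hK.exists_bound_of_continuousOn hf.continuousOn
  have hae : ∀ᵐ x ∂μ, x ∈ K := by
    rw [ae_iff]
    simpa [Set.compl_def] using h0
  exact (integrable_const C).mono' hf.aestronglyMeasurable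
    (hae.mono fun x hx => by simpa using hC x hx)

/-- If `V` is Lasry-Lions monotone, then
`L(x,α,μ) = ‖α + β ∫ γ dμ‖²/2 + V(x,μ)` is Lasry-Lions monotone. -/
theorem stmt3 (d : ℕ) (β : ℝ) (hβ : 0 ≤ β)
    (V : EuclideanSpace ℝ (Fin d) →
      Measure (EuclideanSpace ℝ (Fin d) × EuclideanSpace ℝ (Fin d)) → ℝ)
    (hVmono : ∀ μ₁ μ₂ : Measure (EuclideanSpace ℝ (Fin d) × EuclideanSpace ℝ (Fin d)),
      IsProbabilityMeasure μ₁ → IsProbabilityMeasure μ₂ →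
      0 ≤ (∫ p, (V p.1 μ₁ - V p.1 μ₂) ∂μ₁) - (∫ p, (V p.1 μ₁ - V p.1 μ₂) ∂μ₂))
    (μ₁ μ₂ : Measure (EuclideanSpace ℝ (Fin d) × EuclideanSpace ℝ (Fin d)))
    (h₁ : IsProbabilityMeasure μ₁) (h₂ : IsProbabilityMeasure μ₂)
    -- compact support
    (hc₁ : ∃ K, IsCompact K ∧ μ₁ Kᶜ = 0) (hc₂ : ∃ K, IsCompact K ∧ μ₂ Kᶜ = 0)
    -- integrability of the coupling terms
    (hV : ∀ μ ∈ ({μ₁, μ₂} : Set (Measure _)), ∀ ν ∈ ({μ₁, μ₂} : Set (Measure _)),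
      Integrable (fun p => V p.1 ν) μ)
    (L : Measure (EuclideanSpace ℝ (Fin d) × EuclideanSpace ℝ (Fin d)) →
      EuclideanSpace ℝ (Fin d) × EuclideanSpace ℝ (Fin d) → ℝ)
    (hL : ∀ μ p, L μ p = ‖p.2 + β • (∫ q, q.2 ∂μ)‖ ^ 2 / 2 + V p.1 μ) :
    0 ≤ (∫ p, (L μ₁ p - L μ₂ p) ∂μ₁) - (∫ p, (L μ₁ p - L μ₂ p) ∂μ₂) := by
  classical
  obtain ⟨K₁, hK₁, hn₁⟩ := hc₁
  obtain ⟨K₂, hK₂, hn₂⟩ := hc₂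
  have hK : IsCompact (K₁ ∪ K₂) := hK₁.union hK₂
  have hn₁' : μ₁ (K₁ ∪ K₂)ᶜ = 0 :=
    measure_mono_null (Set.compl_subset_compl.mpr Set.subset_union_left) hn₁
  have hn₂' : μ₂ (K₁ ∪ K₂)ᶜ = 0 :=
    measure_mono_null (Set.compl_subset_compl.mpr Set.subset_union_right) hn₂
  set a : EuclideanSpace ℝ (Fin d) := ∫ q, q.2 ∂μ₁ with ha
  set b : EuclideanSpace ℝ (Fin d) := ∫ q, q.2 ∂μ₂ with hb
  set c : EuclideanSpace ℝ (Fin d) := β • (a - b) with hc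
  -- pointwise decomposition
  have hpt : ∀ p : EuclideanSpace ℝ (Fin d) × EuclideanSpace ℝ (Fin d),
      L μ₁ p - L μ₂ p =
      ((inner ℝ c p.2 : ℝ) + (‖β • a‖ ^ 2 - ‖β • b‖ ^ 2) / 2) + (V p.1 μ₁ - V p.1 μ₂) := by
    intro p
    rw [hL, hL, ← ha, ← hb]
    have h1 : ‖p.2 + β • a‖ ^ 2 = ‖p.2‖ ^ 2 + 2 * (inner ℝ p.2 (β • a) : ℝ) + ‖β • a‖ ^ 2 :=
      norm_add_sq_real _ _
    have h2 : ‖p.2 + β • b‖ ^ 2 = ‖p.2‖ ^ 2 + 2 * (inner ℝ p.2 (β • b) : ℝ) + ‖β • b‖ ^ 2 :=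
      norm_add_sq_real _ _
    have h3 : (inner ℝ c p.2 : ℝ) = (inner ℝ p.2 (β • a) : ℝ) - (inner ℝ p.2 (β • b) : ℝ) := by
      rw [hc, smul_sub, inner_sub_left, real_inner_comm p.2, real_inner_comm p.2]
    rw [h1, h2, h3]
    ring
  -- key computation of each integral
  have key : ∀ μ : Measure (EuclideanSpace ℝ (Fin d) × EuclideanSpace ℝ (Fin d)),
      IsProbabilityMeasure μ → μ (K₁ ∪ K₂)ᶜ = 0 →
      Integrable (fun p => V p.1 μ₁) μ → Integrable (fun p => V p.1 μ₂) μ →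
      ∫ p, (L μ₁ p - L μ₂ p) ∂μ =
        ((inner ℝ c (∫ p, p.2 ∂μ) : ℝ) + (‖β • a‖ ^ 2 - ‖β • b‖ ^ 2) / 2) +
          ∫ p, (V p.1 μ₁ - V p.1 μ₂) ∂μ := by
    intro μ hp hnull hI1 hI2
    have hsnd : Integrable
        (fun p : EuclideanSpace ℝ (Fin d) × EuclideanSpace ℝ (Fin d) => p.2) μ :=
      integrable_of_compactNull hK hnull continuous_snd
    have hinner : Integrable
        (fun p : EuclideanSpace ℝ (Fin d) × EuclideanSpace ℝ (Fin d) =>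
          (inner ℝ c p.2 : ℝ)) μ := hsnd.const_inner c
    simp_rw [hpt]
    rw [integral_add (f := fun p : EuclideanSpace ℝ (Fin d) × EuclideanSpace ℝ (Fin d) =>
        (inner ℝ c p.2 : ℝ) + (‖β • a‖ ^ 2 - ‖β • b‖ ^ 2) / 2)
      (g := fun p => V p.1 μ₁ - V p.1 μ₂)
      (hinner.add (integrable_const _)) (hI1.sub hI2),
      integral_add (f := fun p : EuclideanSpace ℝ (Fin d) × EuclideanSpace ℝ (Fin d) =>
        (inner ℝ c p.2 : ℝ)) (g := fun _ => (‖β • a‖ ^ 2 - ‖β • b‖ ^ 2) / 2)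
      hinner (integrable_const _),
      integral_inner hsnd c,
      integral_const, probReal_univ, one_smul]
  have e₁ := key μ₁ h₁ hn₁' (hV μ₁ (by simp) μ₁ (by simp)) (hV μ₁ (by simp) μ₂ (by simp))
  have e₂ := key μ₂ h₂ hn₂' (hV μ₂ (by simp) μ₁ (by simp)) (hV μ₂ (by simp) μ₂ (by simp))
  rw [e₁, e₂, ← ha, ← hb]
  have hinn : (inner ℝ c a : ℝ) - (inner ℝ c b : ℝ) = β * ‖a - b‖ ^ 2 := by
    rw [hc, real_inner_smul_left, real_inner_smul_left, ← mul_sub, ← inner_sub_right,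
      real_inner_self_eq_norm_sq]
  have hVpos := hVmono μ₁ μ₂ h₁ h₂
  have hquad : 0 ≤ β * ‖a - b‖ ^ 2 := mul_nonneg hβ (by positivity)
  nlinarith [hinn, hVpos, hquad]
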